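/- Let D = (Q, C, q_init, δ, F) be a finite deterministic automaton with a single final state q_fin that is absorbing, let W = Reach(L(D)) be the derived regular reachability objective, and let M = (M, m_init, α_upd) be a chromatic memory structure. Then W is M-progress-consistent if and only if: for all m ∈ M and all q₁ ∈ Q, if L^M_{m_init→m} ∩ L^D_{q_init→q₁} ≠ ∅, then for all q₂ ∈ Q with q₂ ≠ q_fin and q₁ ≺ q₂, one has L^M_{m→m} ∩ L^D_{q₁→q₂} ∩ L^D_{q₂→q₂} = ∅. -/

import Mathlib

set_option autoImplicit false

namespace RegularMemory

/-- Concatenation of a finite word with an infinite word. -/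
def wcat {C : Type} (w : List C) (x : ℕ → C) : ℕ → C := fun n =>
  if h : n < w.length then w.get ⟨n, h⟩ else x (n - w.length)

/-- The infinite word `w^ω` (junk value if `w` is empty). -/
noncomputable def wpow {C : Type} [Nonempty C] : List C → ℕ → C
  | [] => fun _ => Classical.arbitrary C
  | (a :: l) => fun n => (a :: l).get ⟨n % (a :: l).length, Nat.mod_lt n (Nat.succ_pos _)⟩

/-- Winning continuations `w⁻¹W` of the finite word `w` for the objective `W`. -/
def contAfter {C : Type} (W : Set (ℕ → C)) (w : List C) : Set (ℕ → C) :=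
  {x | wcat w x ∈ W}

/-- Prefix preorder `w₁ ⪯_W w₂`. -/
def prefLe {C : Type} (W : Set (ℕ → C)) (w₁ w₂ : List C) : Prop :=
  contAfter W w₁ ⊆ contAfter W w₂

/-- Strict prefix relation `w₁ ≺_W w₂`. -/
def prefLt {C : Type} (W : Set (ℕ → C)) (w₁ w₂ : List C) : Prop :=
  prefLe W w₁ w₂ ∧ ¬ prefLe W w₂ w₁

/-- Comparability for the prefix preorder. -/
def PrefComparable {C : Type} (W : Set (ℕ → C)) (w₁ w₂ : List C) : Prop :=
  prefLe W w₁ w₂ ∨ prefLe W w₂ w₁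

/-- The general reachability objective derived from `A`: infinite words with a prefix in `A`. -/
def ReachObj {C : Type} (A : Set (List C)) : Set (ℕ → C) :=
  {x | ∃ n : ℕ, (List.ofFn fun i : Fin n => x i) ∈ A}

/-- The general safety objective derived from `A`. -/
def SafeObj {C : Type} (A : Set (List C)) : Set (ℕ → C) :=
  (ReachObj A)ᶜ

/-- The prefix preorder of `W` has finitely many equivalence classes. -/
def FinClasses {C : Type} (W : Set (ℕ → C)) : Prop :=
  (Set.range fun w : List C => contAfter W w).Finite

/-- The prefix preorder of `W` is well-founded:
every nonempty chain contains a minimal element. -/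
def PrefWellFounded {C : Type} (W : Set (ℕ → C)) : Prop :=
  ∀ S : Set (List C), S.Nonempty →
    (∀ w₁ ∈ S, ∀ w₂ ∈ S, PrefComparable W w₁ w₂) →
    ∃ w₀ ∈ S, ∀ w ∈ S, ¬ prefLt W w w₀

/-- Chromatic memory structure. -/
structure MemStruct (C : Type) where
  M : Type
  init : M
  upd : M → C → M

/-- Extension of the update function to finite words. -/
def MemStruct.updStar {C : Type} (N : MemStruct C) (m : N.M) (w : List C) : N.M :=
  w.foldl N.upd m

/-- The trivial one-state memory structure. -/
def trivMem (C : Type) : MemStruct C :=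
  ⟨Unit, (), fun _ _ => ()⟩

/-- `W` is `N`-strongly-monotone. -/
def StronglyMonotone {C : Type} (N : MemStruct C) (W : Set (ℕ → C)) : Prop :=
  ∀ w₁ w₂ : List C,
    N.updStar N.init w₁ = N.updStar N.init w₂ → PrefComparable W w₁ w₂

/-- `W` is `N`-progress-consistent. -/
def ProgressConsistent {C : Type} [Nonempty C] (N : MemStruct C) (W : Set (ℕ → C)) : Prop :=
  ∀ (m : N.M) (w₁ w₂ : List C),
    N.updStar N.init w₁ = m → N.updStar m w₂ = m →
    prefLt W w₁ (w₁ ++ w₂) → wcat w₁ (wpow w₂) ∈ W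

/-- Two-player arena with colored edges; Player-1 vertices have outgoing edges
(so that strategies of Player 1 exist). -/
structure Arena (C : Type) where
  V : Type
  P1 : V → Prop
  E : Set (V × C × V)
  succ : ∀ v : V, P1 v → ∃ e ∈ E, e.1 = v

namespace Arena

/-- Valid histories starting at a given vertex. -/
def HistFrom {C : Type} (A : Arena C) : A.V → List (A.V × C × A.V) → Prop
  | _, [] => True
  | v, e :: l => e ∈ A.E ∧ e.1 = v ∧ HistFrom A e.2.2 l

/-- Endpoint of a history. -/
def endFrom {C : Type} (A : Arena C) : A.V → List (A.V × C × A.V) → A.V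
  | v, [] => v
  | _, e :: l => endFrom A e.2.2 l

/-- Infinite plays from a vertex. -/
def PlayFrom {C : Type} (A : Arena C) (v : A.V) (π : ℕ → A.V × C × A.V) : Prop :=
  (π 0).1 = v ∧ ∀ n : ℕ, π n ∈ A.E ∧ (π n).2.2 = (π (n + 1)).1

/-- Colors along a play. -/
def playCol {C V : Type} (π : ℕ → V × C × V) : ℕ → C :=
  fun n => (π n).2.1

/-- Strategies of Player 1: on every valid history ending in a Player-1 vertex,
the strategy picks an edge leaving that vertex. -/
structure Strategy {C : Type} (A : Arena C) where
  next : A.V → List (A.V × C × A.V) → A.V × C × A.V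
  legal : ∀ (v : A.V) (l : List (A.V × C × A.V)),
    A.HistFrom v l → A.P1 (A.endFrom v l) →
      next v l ∈ A.E ∧ (next v l).1 = A.endFrom v l

/-- A play from `v` is consistent with the strategy `σ`. -/
def Strategy.Consistent {C : Type} {A : Arena C} (σ : A.Strategy) (v : A.V)
    (π : ℕ → A.V × C × A.V) : Prop :=
  ∀ n : ℕ, A.P1 (A.endFrom v (List.ofFn fun i : Fin n => π i)) →
    π n = σ.next v (List.ofFn fun i : Fin n => π i)

/-- `σ` is winning from `v` for the objective `W`. -/
def Strategy.WinningFrom {C : Type} {A : Arena C} (σ : A.Strategy)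
    (W : Set (ℕ → C)) (v : A.V) : Prop :=
  ∀ π : ℕ → A.V × C × A.V, A.PlayFrom v π → σ.Consistent v π → playCol π ∈ W

/-- `σ` is optimal in `(A, W)`: winning from every vertex from which
Player 1 has some winning strategy. -/
def Strategy.Optimal {C : Type} {A : Arena C} (σ : A.Strategy) (W : Set (ℕ → C)) : Prop :=
  ∀ v : A.V, (∃ σ' : A.Strategy, σ'.WinningFrom W v) → σ.WinningFrom W v

/-- `σ` is based on the memory structure `N`. -/
def Strategy.BasedOn {C : Type} {A : Arena C} (σ : A.Strategy) (N : MemStruct C) : Prop :=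
  ∃ nxt : A.V → N.M → A.V × C × A.V,
    ∀ (v : A.V) (l : List (A.V × C × A.V)),
      A.HistFrom v l → A.P1 (A.endFrom v l) →
        σ.next v l = nxt (A.endFrom v l) (N.updStar N.init (l.map fun e => e.2.1))

/-- Finite arena: finitely many vertices and edges. -/
def IsFinite {C : Type} (A : Arena C) : Prop := Finite A.V ∧ A.E.Finite

/-- Finitely branching arena. -/
def FinBranching {C : Type} (A : Arena C) : Prop :=
  ∀ v : A.V, {e ∈ A.E | e.1 = v}.Finite

/-- One-player arena of Player 1. -/
def OneP1 {C : Type} (A : Arena C) : Prop := ∀ v : A.V, A.P1 v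

end Arena

/-- `N` suffices to play optimally for `W` in all arenas of the class `P`. -/
def SufficesIn {C : Type} (N : MemStruct C) (W : Set (ℕ → C))
    (P : Arena C → Prop) : Prop :=
  ∀ A : Arena C, P A → ∃ σ : A.Strategy, σ.BasedOn N ∧ σ.Optimal W

/-- Deterministic automaton (with complete transition function). -/
structure DetAuto (C : Type) where
  Q : Type
  init : Q
  δ : Q → C → Q
  F : Set Q

/-- Extension of the transition function to finite words. -/
def DetAuto.δStar {C : Type} (D : DetAuto C) (q : D.Q) (w : List C) : D.Q :=
  w.foldl D.δ q

/-- Language recognized by `D`. -/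
def DetAuto.lang {C : Type} (D : DetAuto C) : Set (List C) :=
  {w | D.δStar D.init w ∈ D.F}

/-- Prefix preorder extended to automaton states. -/
def statePrefLe {C : Type} (D : DetAuto C) (W : Set (ℕ → C)) (q₁ q₂ : D.Q) : Prop :=
  ∀ w₁ w₂ : List C,
    D.δStar D.init w₁ = q₁ → D.δStar D.init w₂ = q₂ → prefLe W w₁ w₂

def statePrefLt {C : Type} (D : DetAuto C) (W : Set (ℕ → C)) (q₁ q₂ : D.Q) : Prop :=
  statePrefLe D W q₁ q₂ ∧ ¬ statePrefLe D W q₂ q₁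

def StateComparable {C : Type} (D : DetAuto C) (W : Set (ℕ → C)) (q₁ q₂ : D.Q) : Prop :=
  statePrefLe D W q₁ q₂ ∨ statePrefLe D W q₂ q₁

/-- Monotone decomposition of `D` with `k` sets. -/
def MonotoneDecomposition {C : Type} (D : DetAuto C) (W : Set (ℕ → C))
    {k : ℕ} (Γ : Fin k → Set D.Q) : Prop :=
  (∀ q : D.Q, ∃ i : Fin k, q ∈ Γ i) ∧
  (∀ (c : C) (i : Fin k), ∃ j : Fin k, (fun q => D.δ q c) '' Γ i ⊆ Γ j) ∧
  (∀ i : Fin k, ∀ q₁ ∈ Γ i, ∀ q₂ ∈ Γ i, StateComparable D W q₁ q₂)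

end RegularMemory


namespace RegularMemory

section Helpers
variable {C : Type}

theorem δStar_append (D : DetAuto C) (q : D.Q) (u v : List C) :
    D.δStar q (u ++ v) = D.δStar (D.δStar q u) v := List.foldl_append

theorem ofFn_split (x : ℕ → C) (a k : ℕ) :
    (List.ofFn fun i : Fin (a + k) => x i)
      = (List.ofFn fun i : Fin a => x i) ++ (List.ofFn fun i : Fin k => x (a + i)) := by
  rw [List.ofFn_add]
  congr 1

theorem ofFn_wcat (w : List C) (x : ℕ → C) (k : ℕ) :
    (List.ofFn fun i : Fin (w.length + k) => wcat w x i)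
      = w ++ (List.ofFn fun i : Fin k => x i) := by
  rw [ofFn_split]
  congr 1
  · conv_rhs => rw [← List.ofFn_get w]
    congr 1
    funext i
    simp [wcat, i.isLt]
  · congr 1
    funext i
    simp [wcat]

theorem wpow_eq {C : Type} [Nonempty C] (w : List C) (hw : w ≠ []) :
    wpow w = wcat w (wpow w) := by
  obtain ⟨a, l, rfl⟩ : ∃ a l, w = a :: l := by
    cases w with
    | nil => exact absurd rfl hw
    | cons a l => exact ⟨a, l, rfl⟩
  funext n
  by_cases h : n < (a :: l).length
  · simp only [wpow, wcat, dif_pos h]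
    congr 1
    exact Fin.ext (Nat.mod_eq_of_lt h)
  · simp only [wpow, wcat, dif_neg h]
    congr 1
    exact Fin.ext (by
      push_neg at h
      simpa using (Nat.mod_eq_sub_mod h).symm ▸ rfl)

def npow (w : List C) : ℕ → List C
  | 0 => []
  | k + 1 => w ++ npow w k

theorem npow_add (w : List C) (a b : ℕ) : npow w (a + b) = npow w a ++ npow w b := by
  induction a with
  | zero => simp [npow]
  | succ a ih =>
    have : a + 1 + b = (a + b) + 1 := by omega
    rw [this]
    simp only [npow, ih, List.append_assoc]

theorem ofFn_nat_congr (x : ℕ → C) {m n : ℕ} (h : m = n) :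
    (List.ofFn fun i : Fin m => x i) = (List.ofFn fun i : Fin n => x i) := by
  subst h; rfl

theorem ofFn_wpow [Nonempty C] (w : List C) (hw : w ≠ []) (k : ℕ) :
    (List.ofFn fun i : Fin (k * w.length) => wpow w i) = npow w k := by
  induction k with
  | zero => simp [npow]
  | succ k ih =>
    have e : (k + 1) * w.length = w.length + k * w.length := by ring
    rw [ofFn_nat_congr (wpow w) e, wpow_eq w hw, ofFn_wcat]
    rw [ih]
    rfl

end Helpers

section Helpers2
variable {C : Type}

theorem updStar_append (N : MemStruct C) (m : N.M) (u v : List C) :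
    N.updStar m (u ++ v) = N.updStar (N.updStar m u) v := List.foldl_append

/-- States from which `qfin` is reachable along a prefix of `x`. -/
def stCont (D : DetAuto C) (qfin : D.Q) (q : D.Q) : Set (ℕ → C) :=
  {x | ∃ n : ℕ, D.δStar q (List.ofFn fun i : Fin n => x i) = qfin}

variable (D : DetAuto C) (qfin : D.Q)

theorem δStar_qfin (habs : ∀ c : C, D.δ qfin c = qfin) (u : List C) :
    D.δStar qfin u = qfin := by
  induction u with
  | nil => rfl
  | cons c u ih => simpa [DetAuto.δStar, habs] using ih

theorem run_absorb (habs : ∀ c : C, D.δ qfin c = qfin) (q0 : D.Q) (x : ℕ → C)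
    {n N : ℕ} (hnN : n ≤ N)
    (h : D.δStar q0 (List.ofFn fun i : Fin n => x i) = qfin) :
    D.δStar q0 (List.ofFn fun i : Fin N => x i) = qfin := by
  obtain ⟨k, rfl⟩ : ∃ k, N = n + k := ⟨N - n, by omega⟩
  rw [ofFn_split, δStar_append, h, δStar_qfin D qfin habs]

theorem contAfter_eq (hF : D.F = {qfin}) (habs : ∀ c : C, D.δ qfin c = qfin)
    (w : List C) :
    contAfter (ReachObj D.lang) w = stCont D qfin (D.δStar D.init w) := by
  ext x
  constructor
  · rintro ⟨n, hn⟩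
    have hn' : D.δStar D.init (List.ofFn fun i : Fin n => wcat w x i) = qfin := by
      have := hn
      rw [DetAuto.lang, Set.mem_setOf_eq, hF, Set.mem_singleton_iff] at this
      exact this
    have h2 := run_absorb D qfin habs D.init (wcat w x)
      (Nat.le_add_left n w.length) hn'
    rw [ofFn_wcat, δStar_append] at h2
    exact ⟨n, h2⟩
  · rintro ⟨k, hk⟩
    refine ⟨w.length + k, ?_⟩
    rw [DetAuto.lang, Set.mem_setOf_eq, hF, Set.mem_singleton_iff,
      ofFn_wcat, δStar_append]
    exact hk

theorem stCont_mono (habs : ∀ c : C, D.δ qfin c = qfin) (q₁ q₂ : D.Q)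
    (h : stCont D qfin q₁ ⊆ stCont D qfin q₂) (u : List C) :
    stCont D qfin (D.δStar q₁ u) ⊆ stCont D qfin (D.δStar q₂ u) := by
  rintro y ⟨k, hk⟩
  have h1 : wcat u y ∈ stCont D qfin q₁ := by
    refine ⟨u.length + k, ?_⟩
    rw [ofFn_wcat, δStar_append]
    exact hk
  obtain ⟨n, hn⟩ := h h1
  refine ⟨n, ?_⟩
  have h2 := run_absorb D qfin habs q₂ (wcat u y) (Nat.le_add_left n u.length) hn
  rw [ofFn_wcat, δStar_append] at h2
  exact h2

theorem statePrefLe_iff (hF : D.F = {qfin}) (habs : ∀ c : C, D.δ qfin c = qfin)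
    (hreach : ∀ q : D.Q, ∃ w : List C, D.δStar D.init w = q) (q₁ q₂ : D.Q) :
    statePrefLe D (ReachObj D.lang) q₁ q₂ ↔ stCont D qfin q₁ ⊆ stCont D qfin q₂ := by
  constructor
  · intro h
    obtain ⟨u, hu⟩ := hreach q₁
    obtain ⟨v, hv⟩ := hreach q₂
    have := h u v hu hv
    rw [prefLe, contAfter_eq D qfin hF habs, contAfter_eq D qfin hF habs, hu, hv] at this
    exact this
  · intro h u v hu hv
    rw [prefLe, contAfter_eq D qfin hF habs, contAfter_eq D qfin hF habs, hu, hv]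
    exact h

theorem δStar_npow_fix (q : D.Q) (w : List C) (h : D.δStar q w = q) (k : ℕ) :
    D.δStar q (npow w k) = q := by
  induction k with
  | zero => rfl
  | succ k ih => rw [npow, δStar_append, h, ih]

theorem updStar_npow_fix (N : MemStruct C) (m : N.M) (w : List C)
    (h : N.updStar m w = m) (k : ℕ) :
    N.updStar m (npow w k) = m := by
  induction k with
  | zero => rfl
  | succ k ih => rw [npow, updStar_append, h, ih]

end Helpers2


theorem progressConsistent_reformulation' {C : Type} [Nonempty C]
    (D : DetAuto C) (hQfin : Finite D.Q) (qfin : D.Q)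
    (hF : D.F = {qfin})
    (habs : ∀ c : C, D.δ qfin c = qfin)
    (hreach : ∀ q : D.Q, ∃ w : List C, D.δStar D.init w = q)
    (N : MemStruct C) :
    ProgressConsistent N (ReachObj D.lang) ↔
      ∀ (m : N.M) (q₁ : D.Q),
        (∃ w : List C, N.updStar N.init w = m ∧ D.δStar D.init w = q₁) →
        ∀ q₂ : D.Q, q₂ ≠ qfin → statePrefLt D (ReachObj D.lang) q₁ q₂ →
          ¬ ∃ w : List C,
              N.updStar m w = m ∧ D.δStar q₁ w = q₂ ∧ D.δStar q₂ w = q₂ := by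
  constructor
  · rintro hpc m q₁ ⟨w, hwm, hwq⟩ q₂ hq2fin hlt ⟨w', hw'm, hw'1, hw'2⟩
    have hq12 : q₁ ≠ q₂ := by
      rintro rfl
      exact hlt.2 hlt.1
    have hw'ne : w' ≠ [] := by
      rintro rfl
      exact hq12 hw'1
    have hwq2 : D.δStar D.init (w ++ w') = q₂ := by rw [δStar_append, hwq, hw'1]
    have hlt' : prefLt (ReachObj D.lang) w (w ++ w') := by
      constructor
      · show contAfter _ _ ⊆ contAfter _ _
        rw [contAfter_eq D qfin hF habs, contAfter_eq D qfin hF habs, hwq, hwq2]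
        exact (statePrefLe_iff D qfin hF habs hreach q₁ q₂).1 hlt.1
      · intro hge
        have hge' : contAfter (ReachObj D.lang) (w ++ w') ⊆ contAfter (ReachObj D.lang) w := hge
        rw [contAfter_eq D qfin hF habs, contAfter_eq D qfin hF habs, hwq, hwq2] at hge'
        exact hlt.2 ((statePrefLe_iff D qfin hF habs hreach q₂ q₁).2 hge')
    obtain ⟨n, hn⟩ := hpc m w w' hwm hw'm hlt'
    rw [DetAuto.lang, Set.mem_setOf_eq, hF, Set.mem_singleton_iff] at hn
    have hlen : 1 ≤ w'.length := List.length_pos_iff.2 hw'ne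
    have hN : n ≤ w.length + (n + 1) * w'.length := by nlinarith
    have h2 := run_absorb D qfin habs D.init (wcat w (wpow w')) hN hn
    rw [ofFn_wcat, ofFn_wpow w' hw'ne, δStar_append, hwq] at h2
    have h3 : D.δStar q₁ (npow w' (n + 1)) = q₂ := by
      rw [npow, δStar_append, hw'1, δStar_npow_fix D q₂ w' hw'2]
    rw [h3] at h2
    exact hq2fin h2
  · intro h m w₁ w₂ hm1 hm2 hlt
    by_contra hx
    have hw2ne : w₂ ≠ [] := by
      rintro rfl
      rw [List.append_nil] at hlt
      exact hlt.2 hlt.1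
    set q₁ := D.δStar D.init w₁ with hq₁
    set r : ℕ → D.Q := fun k => D.δStar q₁ (npow w₂ k) with hr
    have r_add : ∀ a b, r (a + b) = D.δStar (r a) (npow w₂ b) := by
      intro a b
      show D.δStar q₁ (npow w₂ (a + b)) = _
      rw [npow_add, δStar_append]
    have hnofin : ∀ k, r k ≠ qfin := by
      intro k hk
      apply hx
      refine ⟨w₁.length + k * w₂.length, ?_⟩
      rw [DetAuto.lang, Set.mem_setOf_eq, hF, Set.mem_singleton_iff,
        ofFn_wcat, ofFn_wpow w₂ hw2ne, δStar_append]
      exact hk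
    have hbase : stCont D qfin (r 0) ⊆ stCont D qfin (r 1) := by
      have h1 : contAfter (ReachObj D.lang) w₁ ⊆ contAfter (ReachObj D.lang) (w₁ ++ w₂) := hlt.1
      rw [contAfter_eq D qfin hF habs, contAfter_eq D qfin hF habs] at h1
      have e1 : r 1 = D.δStar D.init (w₁ ++ w₂) := by
        rw [δStar_append, ← hq₁]
        show D.δStar q₁ (npow w₂ 1) = _
        rw [show npow w₂ 1 = w₂ ++ [] from rfl, List.append_nil]
      rw [show r 0 = q₁ from rfl, e1]
      exact h1
    have hnotle : ¬ stCont D qfin (r 1) ⊆ stCont D qfin (r 0) := by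
      intro hc
      apply hlt.2
      show contAfter (ReachObj D.lang) (w₁ ++ w₂) ⊆ contAfter (ReachObj D.lang) w₁
      rw [contAfter_eq D qfin hF habs, contAfter_eq D qfin hF habs]
      have e1 : r 1 = D.δStar D.init (w₁ ++ w₂) := by
        rw [δStar_append, ← hq₁]
        show D.δStar q₁ (npow w₂ 1) = _
        rw [show npow w₂ 1 = w₂ ++ [] from rfl, List.append_nil]
      rw [← e1, ← hq₁]
      exact hc
    have hstep : ∀ k, stCont D qfin (r k) ⊆ stCont D qfin (r (k + 1)) := by
      intro k
      induction k with
      | zero => exact hbase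
      | succ k ih =>
        have h2 := stCont_mono D qfin habs (r k) (r (k + 1)) ih (npow w₂ 1)
        rw [← r_add, ← r_add] at h2
        exact h2
    have hchain : ∀ a k, stCont D qfin (r a) ⊆ stCont D qfin (r (a + k)) := by
      intro a k
      induction k with
      | zero => exact subset_rfl
      | succ k ih => exact ih.trans (by rw [show a + (k+1) = (a + k) + 1 from rfl]; exact hstep (a + k))
    obtain ⟨i, j, hij, hr_ij⟩ : ∃ i j, i < j ∧ r i = r j := by
      obtain ⟨a, b, hab, he⟩ := Finite.exists_ne_map_eq_of_infinite r
      rcases lt_or_gt_of_ne hab with hlt' | hlt'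
      · exact ⟨a, b, hlt', he⟩
      · exact ⟨b, a, hlt', he.symm⟩
    set p := j - i with hp
    have hp0 : 0 < p := by omega
    have hper : ∀ t, r (i + t + p) = r (i + t) := by
      intro t
      have e : i + t + p = (i + p) + t := by omega
      rw [e, r_add, show i + p = j from by omega, ← hr_ij, ← r_add]
    have hper' : ∀ s t, r (i + t + s * p) = r (i + t) := by
      intro s
      induction s with
      | zero => intro t; simp
      | succ s ih =>
        intro t
        have e : i + t + (s + 1) * p = i + (t + s * p) + p := by ring
        rw [e, hper (t + s * p), show i + (t + s * p) = i + t + s * p from by omega, ih t]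
    set n := p * (i + 1) with hn
    have hni : i ≤ n := by
      rw [hn]
      exact le_trans (Nat.le_succ i) (Nat.le_mul_of_pos_left (i + 1) hp0)
    have hn1 : 1 ≤ n := by
      rw [hn]
      exact Nat.mul_pos hp0 (Nat.succ_pos i)
    have hrn2 : r (n + n) = r n := by
      have e0 : (i + 1) * p = n := by rw [hn, mul_comm]
      have e1 : n + n = i + (n - i) + (i + 1) * p := by rw [e0]; omega
      rw [e1, hper' (i + 1) (n - i), show i + (n - i) = n from by omega]
    have hsub : stCont D qfin q₁ ⊆ stCont D qfin (r n) := by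
      have := hchain 0 n
      rwa [Nat.zero_add, show r 0 = q₁ from rfl] at this
    have hnsub : ¬ stCont D qfin (r n) ⊆ stCont D qfin q₁ := by
      intro hc
      apply hnotle
      have h1 := hchain 1 (n - 1)
      rw [show 1 + (n - 1) = n from by omega] at h1
      exact h1.trans (hc.trans (by rw [show r 0 = q₁ from rfl]))
    have hslt : statePrefLt D (ReachObj D.lang) q₁ (r n) := by
      constructor
      · exact (statePrefLe_iff D qfin hF habs hreach q₁ (r n)).2 hsub
      · intro hc
        exact hnsub ((statePrefLe_iff D qfin hF habs hreach (r n) q₁).1 hc)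
    refine h m q₁ ⟨w₁, hm1, hq₁.symm⟩ (r n) (hnofin n) hslt ⟨npow w₂ n, ?_, ?_, ?_⟩
    · exact updStar_npow_fix N m w₂ hm2 n
    · rfl
    · rw [← r_add]
      exact hrn2

/-- reformulation of progress-consistency for a regular reachability
objective given by a finite automaton `D` with a single absorbing final state. -/
theorem progressConsistent_reformulation {C : Type} [Nonempty C]
    (D : DetAuto C) (hQfin : Finite D.Q) (qfin : D.Q)
    (hF : D.F = {qfin})
    (habs : ∀ c : C, D.δ qfin c = qfin)
    (hreach : ∀ q : D.Q, ∃ w : List C, D.δStar D.init w = q)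
    (N : MemStruct C) :
    ProgressConsistent N (ReachObj D.lang) ↔
      ∀ (m : N.M) (q₁ : D.Q),
        (∃ w : List C, N.updStar N.init w = m ∧ D.δStar D.init w = q₁) →
        ∀ q₂ : D.Q, q₂ ≠ qfin → statePrefLt D (ReachObj D.lang) q₁ q₂ →
          ¬ ∃ w : List C,
              N.updStar m w = m ∧ D.δStar q₁ w = q₂ ∧ D.δStar q₂ w = q₂ :=
  progressConsistent_reformulation' D hQfin qfin hF habs hreach N

end RegularMemory
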